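/- (Nearby prestress stable framework, Theorem 4.) Assume the framework setup and suppose D_pss = (η₁/L)(√μ̄ + (3/2)(η₁/L) + (1/2)(|p|/L)) < 1/2. Then there exists p' ∈ 𝒞^p with |p' − p| ≤ η₁ such that, defining the stress ω' ∈ ℝ^m by ω'_{ij} = κ(|p'_i − p'_j|² − |p_i − p_j|²) + ω_{ij}, one has: Σ_{(i,j)∈E} ω'_{ij}⟨p'_i − p'_j, v_i − v_j⟩ = 0 for every v ∈ 𝒞 (the energy gradient vanishes on 𝒞 at p'), and 2κ|R(p')v|² + Ω_{ω'}(v) > 0 for every nonzero v ∈ 𝒞 (the energy Hessian is positive definite on 𝒞). In particular, every nonzero v ∈ 𝒞 with R(p')v = 0 satisfies Ω_{ω'}(v) > 0, so p' is prestress stable. -/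

import Mathlib

noncomputable section
open scoped BigOperators InnerProductSpace Classical

/-- Configuration space of `n` points in `ℝ^d`, with the Euclidean norm on `ℝ^{dn}`. -/
abbrev Config (n d : ℕ) := PiLp 2 (fun _ : Fin n => EuclideanSpace ℝ (Fin d))

/-- The rigidity operator `R(q)` applied to `u`: the `k`-th entry, for edge `k = (i,j)`,
is `⟨q_i - q_j, u_i - u_j⟩`. -/
def rig {n d m : ℕ} (E : Fin m → Fin n × Fin n) (q u : Config n d) :
    EuclideanSpace ℝ (Fin m) :=
  WithLp.toLp 2 (fun k => ⟪q (E k).1 - q (E k).2, u (E k).1 - u (E k).2⟫_ℝ)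

/-- The stress form `Ω_ω(v) = Σ_{(i,j)∈E} ω_{ij} |v_i - v_j|²`. -/
def stressForm {n d m : ℕ} (E : Fin m → Fin n × Fin n)
    (ω : EuclideanSpace ℝ (Fin m)) (v : Config n d) : ℝ :=
  ∑ k, ω k * ‖v (E k).1 - v (E k).2‖ ^ 2

/-- The vector `ωᵀ R(p) ∈ ℝ^{dn}` whose `l`-th block is `Σ_{j : (l,j)∈E} ω_{lj} (p_l - p_j)`. -/
def stressGrad {n d m : ℕ} (E : Fin m → Fin n × Fin n)
    (ω : EuclideanSpace ℝ (Fin m)) (p : Config n d) : Config n d :=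
  WithLp.toLp 2 (fun l => ∑ k, (((if (E k).1 = l then (1:ℝ) else 0) - (if (E k).2 = l then (1:ℝ) else 0)) * ω k) •
    (p (E k).1 - p (E k).2))

/-- The vector `e(q) ∈ ℝ^m` of squared edge lengths. -/
def esq {n d m : ℕ} (E : Fin m → Fin n × Fin n) (q : Config n d) :
    EuclideanSpace ℝ (Fin m) :=
  WithLp.toLp 2 (fun k => ‖q (E k).1 - q (E k).2‖ ^ 2)

/-- `z` bounds the number of edges incident to each vertex (`z ≥` the maximum adjacency). -/
def degBound {n m : ℕ} (E : Fin m → Fin n × Fin n) (z : ℝ) : Prop :=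
  ∀ l : Fin n, ((Finset.univ.filter (fun k => (E k).1 = l ∨ (E k).2 = l)).card : ℝ) ≤ z


namespace NPS

variable {n d m : ℕ}

def ed (E : Fin m → Fin n × Fin n) (k : Fin m) (w : Config n d) :
    EuclideanSpace ℝ (Fin d) := w (E k).1 - w (E k).2

lemma ed_add (E : Fin m → Fin n × Fin n) (k : Fin m) (u v : Config n d) :
    ed E k (u + v) = ed E k u + ed E k v := by
  simp only [ed, PiLp.add_apply]; abel

lemma ed_smul (E : Fin m → Fin n × Fin n) (k : Fin m) (c : ℝ) (v : Config n d) :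
    ed E k (c • v) = c • ed E k v := by
  simp only [ed, PiLp.smul_apply, smul_sub]

lemma norm_sq_config (w : Config n d) : ‖w‖^2 = ∑ l, ‖w l‖^2 :=
  PiLp.norm_sq_eq_of_L2 _ w

lemma norm_sq_euc (x : EuclideanSpace ℝ (Fin m)) : ‖x‖^2 = ∑ k, (x k)^2 := by
  rw [PiLp.norm_sq_eq_of_L2]
  simp [Real.norm_eq_abs, sq_abs]

lemma rig_norm_sq (E : Fin m → Fin n × Fin n) (q u : Config n d) :
    ‖rig E q u‖^2 = ∑ k, (⟪ed E k q, ed E k u⟫_ℝ)^2 := by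
  rw [norm_sq_euc]; rfl

lemma rig_smul (E : Fin m → Fin n × Fin n) (q : Config n d) (c : ℝ) (u : Config n d) :
    rig E q (c • u) = c • rig E q u := by
  ext k
  simp only [rig, PiLp.smul_apply, smul_eq_mul]
  rw [← smul_sub, inner_smul_right]

lemma stressForm_smul (E : Fin m → Fin n × Fin n) (ω : EuclideanSpace ℝ (Fin m))
    (c : ℝ) (v : Config n d) : stressForm E ω (c • v) = c^2 * stressForm E ω v := by
  simp only [stressForm, Finset.mul_sum]
  apply Finset.sum_congr rfl; intro k _
  rw [show (c • v) (E k).1 - (c • v) (E k).2 = c • (v (E k).1 - v (E k).2) by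
    simp [PiLp.smul_apply, smul_sub]]
  rw [norm_smul]
  simp [mul_pow, sq_abs]; ring

lemma hess_scale (E : Fin m → Fin n × Fin n) (κ : ℝ) (ω' : EuclideanSpace ℝ (Fin m))
    (q : Config n d) (c : ℝ) (v : Config n d) :
    2*κ*‖rig E q (c • v)‖^2 + stressForm E ω' (c • v)
      = c^2*(2*κ*‖rig E q v‖^2 + stressForm E ω' v) := by
  rw [rig_smul, norm_smul, stressForm_smul]
  simp only [Real.norm_eq_abs, mul_pow, sq_abs]
  ring

lemma ed_norm_sq_le {E : Fin m → Fin n × Fin n} {k : Fin m}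
    (hne : (E k).1 ≠ (E k).2) (v : Config n d) : ‖ed E k v‖^2 ≤ 2*‖v‖^2 := by
  have h1 : ‖ed E k v‖ ≤ ‖v (E k).1‖ + ‖v (E k).2‖ := norm_sub_le _ _
  have h2 : ‖v (E k).1‖^2 + ‖v (E k).2‖^2 ≤ ‖v‖^2 := by
    rw [norm_sq_config]
    calc ‖v (E k).1‖^2 + ‖v (E k).2‖^2 = ∑ l ∈ {(E k).1, (E k).2}, ‖v l‖^2 := by
          rw [Finset.sum_pair hne]
      _ ≤ ∑ l, ‖v l‖^2 := Finset.sum_le_sum_of_subset_of_nonneg (Finset.subset_univ _)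
          (fun _ _ _ => by positivity)
  nlinarith [norm_nonneg (ed E k v), sq_nonneg (‖v (E k).1‖ - ‖v (E k).2‖),
    mul_self_le_mul_self (norm_nonneg (ed E k v)) h1]

lemma sum_ed_sq_le {E : Fin m → Fin n × Fin n} {z : ℝ}
    (hE : ∀ k, (E k).1 ≠ (E k).2) (hdeg : degBound E z)
    (v : Config n d) : ∑ k, ‖ed E k v‖^2 ≤ 2*z*‖v‖^2 := by
  have step1 : ∀ k, ‖ed E k v‖^2 ≤ 2 * ∑ l, (if (E k).1 = l ∨ (E k).2 = l then (1:ℝ) else 0) * ‖v l‖^2 := by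
    intro k
    have he : ∑ l, (if (E k).1 = l ∨ (E k).2 = l then (1:ℝ) else 0) * ‖v l‖^2
        = ‖v (E k).1‖^2 + ‖v (E k).2‖^2 := by
      rw [← Finset.sum_filter_add_sum_filter_not Finset.univ (fun l => (E k).1 = l ∨ (E k).2 = l)]
      have h2 : ∑ l ∈ Finset.univ.filter (fun l => ¬((E k).1 = l ∨ (E k).2 = l)),
          (if (E k).1 = l ∨ (E k).2 = l then (1:ℝ) else 0) * ‖v l‖^2 = 0 := by
        apply Finset.sum_eq_zero; intro l hl
        simp only [Finset.mem_filter] at hl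
        simp [hl.2]
      have h1 : Finset.univ.filter (fun l => (E k).1 = l ∨ (E k).2 = l) = {(E k).1, (E k).2} := by
        ext l; simp [eq_comm]
      rw [h1, h2, add_zero, Finset.sum_pair (hE k)]
      simp
    rw [he]
    have h1 : ‖ed E k v‖ ≤ ‖v (E k).1‖ + ‖v (E k).2‖ := norm_sub_le _ _
    nlinarith [norm_nonneg (ed E k v), sq_nonneg (‖v (E k).1‖ - ‖v (E k).2‖),
      mul_self_le_mul_self (norm_nonneg (ed E k v)) h1]
  calc ∑ k, ‖ed E k v‖^2
      ≤ ∑ k, 2 * ∑ l, (if (E k).1 = l ∨ (E k).2 = l then (1:ℝ) else 0) * ‖v l‖^2 :=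
        Finset.sum_le_sum (fun k _ => step1 k)
    _ = 2 * ∑ l, (∑ k, (if (E k).1 = l ∨ (E k).2 = l then (1:ℝ) else 0)) * ‖v l‖^2 := by
        rw [← Finset.mul_sum, Finset.sum_comm]
        congr 1; apply Finset.sum_congr rfl; intro l _
        rw [Finset.sum_mul]
    _ ≤ 2 * ∑ l, z * ‖v l‖^2 := by
        apply mul_le_mul_of_nonneg_left _ (by norm_num)
        apply Finset.sum_le_sum; intro l _
        apply mul_le_mul_of_nonneg_right _ (by positivity)
        simpa [Finset.sum_boole] using hdeg l
    _ = 2*z*‖v‖^2 := by rw [norm_sq_config, ← Finset.mul_sum]; ring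

lemma grad_inner (E : Fin m → Fin n × Fin n) (ω : EuclideanSpace ℝ (Fin m))
    (p v : Config n d) :
    ∑ k, ω k * ⟪ed E k p, ed E k v⟫_ℝ = ⟪stressGrad E ω p, v⟫_ℝ := by
  rw [PiLp.inner_apply]
  have hl : ∀ l, ⟪stressGrad E ω p l, v l⟫_ℝ
      = ∑ k, (((if (E k).1 = l then (1:ℝ) else 0) - (if (E k).2 = l then (1:ℝ) else 0)) * ω k)
        * ⟪ed E k p, v l⟫_ℝ := by
    intro l
    rw [show stressGrad E ω p l = ∑ k, (((if (E k).1 = l then (1:ℝ) else 0) - (if (E k).2 = l then (1:ℝ) else 0)) * ω k) • (ed E k p) from rfl]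
    rw [sum_inner]
    apply Finset.sum_congr rfl; intro k _
    rw [real_inner_smul_left]
  simp only [hl]
  rw [Finset.sum_comm]
  apply Finset.sum_congr rfl; intro k _
  have hsplit : ∀ l, (((if (E k).1 = l then (1:ℝ) else 0) - (if (E k).2 = l then (1:ℝ) else 0)) * ω k) * ⟪ed E k p, v l⟫_ℝ
      = ω k * ((if (E k).1 = l then (1:ℝ) else 0) * ⟪ed E k p, v l⟫_ℝ)
        - ω k * ((if (E k).2 = l then (1:ℝ) else 0) * ⟪ed E k p, v l⟫_ℝ) := by
    intro l; ring
  simp only [hsplit]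
  rw [Finset.sum_sub_distrib, ← Finset.mul_sum, ← Finset.mul_sum]
  have e1 : ∑ l, (if (E k).1 = l then (1:ℝ) else 0) * ⟪ed E k p, v l⟫_ℝ = ⟪ed E k p, v (E k).1⟫_ℝ := by
    rw [Finset.sum_eq_single ((E k).1)]
    · simp
    · intro l _ hl2; rw [if_neg (fun h => hl2 h.symm), zero_mul]
    · intro h; exact absurd (Finset.mem_univ _) h
  have e2 : ∑ l, (if (E k).2 = l then (1:ℝ) else 0) * ⟪ed E k p, v l⟫_ℝ = ⟪ed E k p, v (E k).2⟫_ℝ := by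
    rw [Finset.sum_eq_single ((E k).2)]
    · simp
    · intro l _ hl2; rw [if_neg (fun h => hl2 h.symm), zero_mul]
    · intro h; exact absurd (Finset.mem_univ _) h
  rw [e1, e2, ← mul_sub, ← inner_sub_right]
  rfl

lemma young_cs {X Y S t : ℝ} (hX : 0 ≤ X) (hY : 0 ≤ Y) (hS : S^2 ≤ X*Y) (ht : 0 < t) :
    -(4*t^2*X + Y) ≤ 4*t*S := by
  rcases eq_or_lt_of_le hY with h|h
  · have hS0 : S = 0 := by nlinarith
    rw [hS0, ← h]
    nlinarith [mul_nonneg (mul_nonneg (by norm_num : (0:ℝ) ≤ 4) (sq_nonneg t)) hX]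
  · have key : 0 ≤ 4*t*Y*S + 4*t^2*(X*Y) + Y^2 := by
      nlinarith [sq_nonneg (2*t*S + Y), mul_le_mul_of_nonneg_left hS (by positivity : (0:ℝ) ≤ 4*t^2)]
    by_contra hcon
    push_neg at hcon
    nlinarith [key, mul_pos h (by linarith : 0 < -(4*t*S) - (4*t^2*X + Y))]

set_option maxHeartbeats 1000000 in
lemma quartic_zero {c₁ c₂ c₃ c₄ ε : ℝ} (hε : 0 < ε)
    (h : ∀ s : ℝ, |s| ≤ ε → 0 ≤ c₁*s + c₂*s^2 + c₃*s^3 + c₄*s^4) : c₁ = 0 := by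
  by_contra hc
  have hM0 : 0 ≤ |c₂| + |c₃| + |c₄| := by positivity
  have hc1 : 0 < |c₁| := abs_pos.mpr hc
  have hspos0 : 0 < min (min ε 1) (|c₁|/(|c₂| + |c₃| + |c₄|+1)) :=
    lt_min (lt_min hε one_pos) (by positivity)
  obtain ⟨s, hspos, hsε, hs1, hsc⟩ : ∃ s : ℝ, 0 < s ∧ s ≤ ε ∧ s ≤ 1 ∧
      s ≤ |c₁|/(|c₂| + |c₃| + |c₄|+1) :=
    ⟨_, hspos0, le_trans (min_le_left _ _) (min_le_left _ _),
      le_trans (min_le_left _ _) (min_le_right _ _), min_le_right _ _⟩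
  have h1 := h s (by rw [abs_of_pos hspos]; exact hsε)
  have h2 := h (-s) (by rw [abs_neg, abs_of_pos hspos]; exact hsε)
  have e2 : c₂ ≤ |c₂| := le_abs_self _
  have e2' : -|c₂| ≤ c₂ := neg_abs_le _
  have e3 : c₃ ≤ |c₃| := le_abs_self _
  have e3' : -|c₃| ≤ c₃ := neg_abs_le _
  have e4 : c₄ ≤ |c₄| := le_abs_self _
  have e4' : -|c₄| ≤ c₄ := neg_abs_le _
  have hs2 : (0:ℝ) < s^2 := by positivity
  have hs3 : s^3 ≤ s^2 := by nlinarith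
  have hs4 : s^4 ≤ s^2 := by nlinarith
  have hs3' : (0:ℝ) < s^3 := by positivity
  have hs4' : (0:ℝ) < s^4 := by positivity
  have hub : c₁ * s ≤ (|c₂| + |c₃| + |c₄|) * s^2 := by nlinarith
  have hlb : -((|c₂| + |c₃| + |c₄|) * s^2) ≤ c₁ * s := by nlinarith
  have habs : |c₁| * s ≤ (|c₂| + |c₃| + |c₄|) * s^2 := by
    rcases abs_cases c₁ with ⟨he, _⟩ | ⟨he, _⟩ <;> rw [he] <;> nlinarith
  have h5 : |c₁| ≤ (|c₂| + |c₃| + |c₄|) * s :=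
    le_of_mul_le_mul_right (by nlinarith) hspos
  have h6 : (|c₂| + |c₃| + |c₄|) * s ≤ (|c₂| + |c₃| + |c₄|) * (|c₁|/(|c₂| + |c₃| + |c₄|+1)) :=
    mul_le_mul_of_nonneg_left hsc hM0
  have h7 : (|c₂| + |c₃| + |c₄|) * (|c₁|/(|c₂| + |c₃| + |c₄|+1)) < |c₁| := by
    rw [mul_div_assoc', div_lt_iff₀ (by positivity)]
    have : |c₁| * (|c₂| + |c₃| + |c₄| + 1) = (|c₂| + |c₃| + |c₄|) * |c₁| + |c₁| := by ring
    linarith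
  linarith

def edelta (E : Fin m → Fin n × Fin n) (p w : Config n d) (k : Fin m) : ℝ :=
  ‖ed E k (p + w)‖^2 - ‖ed E k p‖^2

lemma edelta_expand (E : Fin m → Fin n × Fin n) (p w : Config n d) (k : Fin m) :
    edelta E p w k = 2*⟪ed E k p, ed E k w⟫_ℝ + ‖ed E k w‖^2 := by
  unfold edelta
  rw [ed_add, norm_add_sq_real]
  ring

lemma edelta_shift (E : Fin m → Fin n × Fin n) (p u v : Config n d) (s : ℝ) (k : Fin m) :
    edelta E p (u + s • v) k
      = edelta E p u k + 2*s*⟪ed E k (p+u), ed E k v⟫_ℝ + s^2*‖ed E k v‖^2 := by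
  unfold edelta
  rw [show p + (u + s • v) = (p + u) + s • v by abel]
  rw [ed_add (E := E) (k := k) (p+u) (s • v), ed_smul, norm_add_sq_real,
    inner_smul_right, norm_smul]
  simp only [Real.norm_eq_abs, mul_pow, sq_abs]
  ring

def energy (E : Fin m → Fin n × Fin n) (κ : ℝ) (ω : EuclideanSpace ℝ (Fin m))
    (p : Config n d) (w : Config n d) : ℝ :=
  ∑ k, ((κ/4) * (edelta E p w k)^2 + (ω k/2) * (edelta E p w k))

lemma energy_zero (E : Fin m → Fin n × Fin n) (κ : ℝ) (ω : EuclideanSpace ℝ (Fin m))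
    (p : Config n d) : energy E κ ω p 0 = 0 := by
  unfold energy edelta
  rw [show p + 0 = p by abel]
  simp

lemma energy_continuous (E : Fin m → Fin n × Fin n) (κ : ℝ) (ω : EuclideanSpace ℝ (Fin m))
    (p : Config n d) : Continuous (energy E κ ω p) := by
  unfold energy
  apply continuous_finset_sum
  intro k _
  have happ : ∀ i : Fin n, Continuous (fun w : Config n d => w i) :=
    fun i => (continuous_apply i).comp (PiLp.continuousLinearEquiv 2 ℝ _).continuous
  have hed : Continuous (fun w : Config n d => edelta E p w k) := by
    unfold edelta ed
    have h1 : Continuous (fun w : Config n d => (p + w) (E k).1 - (p + w) (E k).2) :=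
      ((continuous_const.add (happ (E k).1)).sub (continuous_const.add (happ (E k).2)))
    exact ((h1.norm.pow 2).sub continuous_const)
  exact ((continuous_const.mul (hed.pow 2)).add (continuous_const.mul hed))

set_option maxHeartbeats 4000000 in
lemma boundary_pos {n d m : ℕ} (E : Fin m → Fin n × Fin n)
    (hE : ∀ k, (E k).1 ≠ (E k).2)
    (z κ lam μ₀ L sμ η₁ : ℝ) (ω : EuclideanSpace ℝ (Fin m)) (p w : Config n d)
    (hdeg : degBound E z)
    (hκ : 0 < κ) (hlam : 0 < lam) (hzpos : 0 < z) (hLpos : 0 < L) (hη₁pos : 0 < η₁)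
    (hL2' : 8*z*κ*L^2 = lam) (hsμpos : 0 < sμ) (hμbar2 : 1/2 ≤ sμ^2)
    (hμ₀eq : μ₀ = lam*(1 - sμ^2))
    (hxs : 2*η₁*sμ < L)
    (hlw : lam*‖w‖^2 ≤ 2*κ*‖rig E p w‖^2 + stressForm E ω w)
    (hμw : μ₀*‖w‖^2 ≤ stressForm E ω w)
    (hgw : -(lam*η₁/4*η₁) ≤ ∑ k, ω k * ⟪ed E k p, ed E k w⟫_ℝ)
    (hw : ‖w‖ = η₁) :
    0 < energy E κ ω p w := by
  have hexp : energy E κ ω p w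
      = κ*(∑ k, (⟪ed E k p, ed E k w⟫_ℝ)^2) + (∑ k, ω k * ‖ed E k w‖^2)/2
        + (∑ k, ω k * ⟪ed E k p, ed E k w⟫_ℝ)
        + κ*(∑ k, ⟪ed E k p, ed E k w⟫_ℝ * ‖ed E k w‖^2)
        + (κ/4)*(∑ k, (‖ed E k w‖^2)^2) := by
    unfold energy
    simp_rw [edelta_expand]
    rw [Finset.mul_sum, Finset.sum_div, Finset.mul_sum, Finset.mul_sum,
      ← Finset.sum_add_distrib, ← Finset.sum_add_distrib, ← Finset.sum_add_distrib,
      ← Finset.sum_add_distrib]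
    exact Finset.sum_congr rfl (fun k _ => by ring)
  have hSa2 : ‖rig E p w‖^2 = ∑ k, (⟪ed E k p, ed E k w⟫_ℝ)^2 := rig_norm_sq E p w
  have hΩ : stressForm E ω w = ∑ k, ω k * ‖ed E k w‖^2 := rfl
  have hb_nonneg : ∀ k : Fin m, (0:ℝ) ≤ ‖ed E k w‖^2 := fun k => by positivity
  have hSA_nonneg : (0:ℝ) ≤ ∑ k, (⟪ed E k p, ed E k w⟫_ℝ)^2 :=
    Finset.sum_nonneg (fun k _ => sq_nonneg _)
  have hSB_nonneg : (0:ℝ) ≤ ∑ k, (‖ed E k w‖^2)^2 :=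
    Finset.sum_nonneg (fun k _ => sq_nonneg _)
  have hCS : (∑ k, ⟪ed E k p, ed E k w⟫_ℝ * ‖ed E k w‖^2)^2
      ≤ (∑ k, (⟪ed E k p, ed E k w⟫_ℝ)^2) * (∑ k, (‖ed E k w‖^2)^2) :=
    Finset.sum_mul_sq_le_sq_mul_sq _ _ _
  have hSb_le : ∑ k, ‖ed E k w‖^2 ≤ 2*z*η₁^2 := by
    have := sum_ed_sq_le hE hdeg w
    rw [hw] at this
    exact this
  have hbk_le : ∀ k, ‖ed E k w‖^2 ≤ 2*η₁^2 := fun k => by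
    have := ed_norm_sq_le (hE k) w
    rw [hw] at this
    exact this
  have hSb2_le : ∑ k, (‖ed E k w‖^2)^2 ≤ 4*z*η₁^4 := by
    calc ∑ k, (‖ed E k w‖^2)^2 ≤ ∑ k, (2*η₁^2) * ‖ed E k w‖^2 := by
          apply Finset.sum_le_sum
          intro k _
          rw [sq]
          exact mul_le_mul_of_nonneg_right (hbk_le k) (hb_nonneg k)
      _ = (2*η₁^2) * ∑ k, ‖ed E k w‖^2 := by rw [Finset.mul_sum]
      _ ≤ (2*η₁^2) * (2*z*η₁^2) := by
          apply mul_le_mul_of_nonneg_left hSb_le (by positivity)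
      _ = 4*z*η₁^4 := by ring
  rw [hSa2, hΩ, hw] at hlw
  rw [hΩ, hw] at hμw
  set SA := ∑ k, (⟪ed E k p, ed E k w⟫_ℝ)^2 with hSAdef
  set SB := ∑ k, (‖ed E k w‖^2)^2 with hSBdef
  set SAB := ∑ k, ⟪ed E k p, ed E k w⟫_ℝ * ‖ed E k w‖^2 with hSABdef
  set OM := ∑ k, ω k * ‖ed E k w‖^2 with hOMdef
  set IP := ∑ k, ω k * ⟪ed E k p, ed E k w⟫_ℝ with hIPdef
  set t := η₁/(2*L*sμ) with ht_def
  have htpos : 0 < t := by rw [ht_def]; positivity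
  have ht_eq : 2*L*sμ*t = η₁ := by
    rw [ht_def]; field_simp
  have ht1 : t < 1 := by
    rw [ht_def, div_lt_one (by positivity)]
    nlinarith
  have hyoung : -(4*t^2*SA + SB) ≤ 4*t*SAB := young_cs hSA_nonneg hSB_nonneg hCS htpos
  rw [hexp]
  have hA1 : 2*t*(1-t)*(lam*η₁^2) ≤ 4*t*(1-t)*κ*SA + 2*t*(1-t)*OM := by
    have h0 : (0:ℝ) ≤ 2*t*(1-t) := by nlinarith
    have := mul_le_mul_of_nonneg_left hlw h0
    nlinarith [this]
  have hA2 : 2*t^2*(μ₀*η₁^2) ≤ 2*t^2*OM := by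
    have := mul_le_mul_of_nonneg_left hμw (by positivity : (0:ℝ) ≤ 2*t^2)
    linarith
  have hA3 : -(t*(lam*η₁^2)) ≤ 4*t*IP := by
    have := mul_le_mul_of_nonneg_left hgw (by positivity : (0:ℝ) ≤ 4*t)
    nlinarith [this]
  have hA4 : (0:ℝ) ≤ κ*(4*t*SAB + (4*t^2*SA + SB)) :=
    mul_nonneg (le_of_lt hκ) (by linarith)
  have hA5 : κ*(1-t)*SB ≤ κ*(1-t)*(4*z*η₁^4) :=
    mul_le_mul_of_nonneg_left hSb2_le (by nlinarith)
  have h4s : 4*sμ^2*t < 1 := by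
    have hxs' : 2*(2*L*sμ*t)*sμ < L := by rw [ht_eq]; exact hxs
    nlinarith [hxs', mul_pos hLpos htpos]
  have hfin : 0 < 2*t*(1-t)*(lam*η₁^2) + 2*t^2*(μ₀*η₁^2) - t*(lam*η₁^2)
      - κ*(1-t)*(4*z*η₁^4) := by
    have heq : 2*t*(1-t)*(lam*η₁^2) + 2*t^2*(μ₀*η₁^2) - t*(lam*η₁^2) - κ*(1-t)*(4*z*η₁^4)
        = 32*z*κ*L^4*sμ^2*t^3*(1 - 4*sμ^2*t + 2*sμ^2*t^2) := by
      rw [hμ₀eq, ← hL2', ← ht_eq]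
      ring
    rw [heq]
    apply mul_pos (by positivity)
    nlinarith [mul_pos (mul_pos hsμpos hsμpos) (mul_pos htpos htpos)]
  have hmain : 0 < 4*t*(κ*SA + OM/2 + IP + κ*SAB + (κ/4)*SB) := by
    have e1 : 4*t*(κ*SA + OM/2 + IP + κ*SAB + (κ/4)*SB)
        = (4*t*(1-t)*κ*SA + 2*t*(1-t)*OM) + 2*t^2*OM + 4*t*IP
          + κ*(4*t*SAB + (4*t^2*SA + SB)) - κ*(1-t)*SB := by
      ring
    rw [e1]
    linarith [hA1, hA2, hA3, hA4, hA5, hfin]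
  by_contra hcon
  push_neg at hcon
  nlinarith [hmain, mul_nonpos_of_nonneg_of_nonpos (by positivity : (0:ℝ) ≤ 4*t) hcon]



lemma prod_bound {A B P Q : ℝ} (hA : 0 ≤ A) (hB : 0 ≤ B) (hP : 0 ≤ P) (hQ : 0 ≤ Q)
    (h1 : A^2 ≤ 2*P^2) (h2 : B^2 ≤ 2*Q^2) : A*B ≤ 2*(P*Q) := by
  nlinarith [mul_nonneg hA hB, mul_nonneg hP hQ,
    mul_le_mul h1 h2 (sq_nonneg B) (by positivity)]

set_option maxHeartbeats 4000000 in
lemma hessian_pos {n d m : ℕ} (E : Fin m → Fin n × Fin n)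
    (hE : ∀ k, (E k).1 ≠ (E k).2)
    (z κ lam μ₀ L sμ η₁ : ℝ) (ω : EuclideanSpace ℝ (Fin m)) (p u v : Config n d)
    (hdeg : degBound E z)
    (hκ : 0 < κ) (hlam : 0 < lam) (hzpos : 0 < z) (hLpos : 0 < L) (hη₁pos : 0 < η₁)
    (hL2' : 8*z*κ*L^2 = lam) (hsμpos : 0 < sμ) (hμbar2 : 1/2 ≤ sμ^2)
    (hμ₀eq : μ₀ = lam*(1 - sμ^2))
    (hxs : 2*η₁*sμ < L)
    (hkey : 2*η₁*sμ*L + η₁*‖p‖ < L^2)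
    (hu : ‖u‖ ≤ η₁)
    (hlw : lam ≤ 2*κ*‖rig E p v‖^2 + stressForm E ω v)
    (hμw : μ₀ ≤ stressForm E ω v)
    (hv1 : ‖v‖ = 1) :
    0 < 2*κ*‖rig E (p+u) v‖^2 + stressForm E (WithLp.toLp 2 (fun k => κ * edelta E p u k + ω k)) v := by
  have h1 : ‖rig E (p+u) v‖^2
      = ∑ k, (⟪ed E k p, ed E k v⟫_ℝ + ⟪ed E k u, ed E k v⟫_ℝ)^2 := by
    rw [rig_norm_sq]
    exact Finset.sum_congr rfl (fun k _ => by rw [ed_add, inner_add_left])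
  have h2 : ∑ k, (⟪ed E k p, ed E k v⟫_ℝ + ⟪ed E k u, ed E k v⟫_ℝ)^2
      = (∑ k, (⟪ed E k p, ed E k v⟫_ℝ)^2)
        + 2*(∑ k, ⟪ed E k p, ed E k v⟫_ℝ * ⟪ed E k u, ed E k v⟫_ℝ)
        + (∑ k, (⟪ed E k u, ed E k v⟫_ℝ)^2) := by
    rw [Finset.mul_sum, ← Finset.sum_add_distrib, ← Finset.sum_add_distrib]
    exact Finset.sum_congr rfl (fun k _ => by ring)
  have h3 : stressForm E (WithLp.toLp 2 (fun k => κ * edelta E p u k + ω k)) v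
      = κ*(∑ k, edelta E p u k * ‖ed E k v‖^2) + stressForm E ω v := by
    show (∑ k, (κ * edelta E p u k + ω k) * ‖ed E k v‖^2) = _
    rw [Finset.mul_sum]
    rw [show stressForm E ω v = ∑ k, ω k * ‖ed E k v‖^2 from rfl]
    rw [← Finset.sum_add_distrib]
    exact Finset.sum_congr rfl (fun k _ => by ring)
  have hc_nonneg : ∀ k : Fin m, (0:ℝ) ≤ ‖ed E k v‖^2 := fun k => by positivity
  have hSC : ∑ k, ‖ed E k v‖^2 ≤ 2*z := by
    have := sum_ed_sq_le hE hdeg v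
    rw [hv1] at this
    simpa using this
  have hSA_nonneg : (0:ℝ) ≤ ∑ k, (⟪ed E k p, ed E k v⟫_ℝ)^2 :=
    Finset.sum_nonneg (fun k _ => sq_nonneg _)
  have hSE_nonneg : (0:ℝ) ≤ ∑ k, (⟪ed E k u, ed E k v⟫_ℝ)^2 :=
    Finset.sum_nonneg (fun k _ => sq_nonneg _)
  have hCS : (∑ k, ⟪ed E k p, ed E k v⟫_ℝ * ⟪ed E k u, ed E k v⟫_ℝ)^2
      ≤ (∑ k, (⟪ed E k p, ed E k v⟫_ℝ)^2) * (∑ k, (⟪ed E k u, ed E k v⟫_ℝ)^2) :=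
    Finset.sum_mul_sq_le_sq_mul_sq _ _ _
  have hη₁nn : 0 ≤ η₁ := le_of_lt hη₁pos
  -- bound on SE
  have hSE : ∑ k, (⟪ed E k u, ed E k v⟫_ℝ)^2 ≤ 4*z*η₁^2 := by
    have hk : ∀ k : Fin m, (⟪ed E k u, ed E k v⟫_ℝ)^2 ≤ (2*η₁^2) * ‖ed E k v‖^2 := by
      intro k
      have hi := abs_real_inner_le_norm (ed E k u) (ed E k v)
      have hedu : ‖ed E k u‖^2 ≤ 2*η₁^2 := by
        have h0 := ed_norm_sq_le (hE k) u
        have h1 : ‖u‖^2 ≤ η₁^2 := pow_le_pow_left₀ (norm_nonneg u) hu 2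
        linarith
      calc (⟪ed E k u, ed E k v⟫_ℝ)^2 = |⟪ed E k u, ed E k v⟫_ℝ|^2 := (sq_abs _).symm
        _ ≤ (‖ed E k u‖*‖ed E k v‖)^2 := pow_le_pow_left₀ (abs_nonneg _) hi 2
        _ = ‖ed E k u‖^2*‖ed E k v‖^2 := by ring
        _ ≤ (2*η₁^2) * ‖ed E k v‖^2 := mul_le_mul_of_nonneg_right hedu (hc_nonneg k)
    calc ∑ k, (⟪ed E k u, ed E k v⟫_ℝ)^2 ≤ ∑ k, (2*η₁^2) * ‖ed E k v‖^2 :=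
          Finset.sum_le_sum (fun k _ => hk k)
      _ = (2*η₁^2) * ∑ k, ‖ed E k v‖^2 := by rw [Finset.mul_sum]
      _ ≤ (2*η₁^2) * (2*z) := mul_le_mul_of_nonneg_left hSC (by positivity)
      _ = 4*z*η₁^2 := by ring
  -- bound on W
  have hW : -(8*z*(‖p‖*η₁)) ≤ ∑ k, edelta E p u k * ‖ed E k v‖^2 := by
    have hk : ∀ k : Fin m, (-(4*(‖p‖*η₁))) * ‖ed E k v‖^2 ≤ edelta E p u k * ‖ed E k v‖^2 := by
      intro k
      apply mul_le_mul_of_nonneg_right _ (hc_nonneg k)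
      rw [edelta_expand]
      have hi : -(‖ed E k p‖*‖ed E k u‖) ≤ ⟪ed E k p, ed E k u⟫_ℝ :=
        (abs_le.mp (abs_real_inner_le_norm _ _)).1
      have hprod : ‖ed E k p‖*‖ed E k u‖ ≤ 2*(‖p‖*η₁) := by
        apply prod_bound (norm_nonneg _) (norm_nonneg _) (norm_nonneg _) hη₁nn
          (ed_norm_sq_le (hE k) p)
        have h0 := ed_norm_sq_le (hE k) u
        have h1 : ‖u‖^2 ≤ η₁^2 := pow_le_pow_left₀ (norm_nonneg u) hu 2
        linarith
      have h2 : (0:ℝ) ≤ ‖ed E k u‖^2 := sq_nonneg _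
      linarith
    calc (-(8*z*(‖p‖*η₁))) = (-(4*(‖p‖*η₁))) * (2*z) := by ring
      _ ≤ (-(4*(‖p‖*η₁))) * ∑ k, ‖ed E k v‖^2 := by
          exact mul_le_mul_of_nonpos_left hSC
            (neg_nonpos.mpr (by positivity : (0:ℝ) ≤ 4*(‖p‖*η₁)))
      _ = ∑ k, (-(4*(‖p‖*η₁))) * ‖ed E k v‖^2 := by rw [Finset.mul_sum]
      _ ≤ ∑ k, edelta E p u k * ‖ed E k v‖^2 := Finset.sum_le_sum (fun k _ => hk k)
  rw [rig_norm_sq] at hlw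
  set SA := ∑ k, (⟪ed E k p, ed E k v⟫_ℝ)^2 with hSAdef
  set SE := ∑ k, (⟪ed E k u, ed E k v⟫_ℝ)^2 with hSEdef
  set SAE := ∑ k, ⟪ed E k p, ed E k v⟫_ℝ * ⟪ed E k u, ed E k v⟫_ℝ with hSAEdef
  set W := ∑ k, edelta E p u k * ‖ed E k v‖^2 with hWdef
  set OM := stressForm E ω v with hOMdef
  set t := η₁/(2*L*sμ) with ht_def
  have htpos : 0 < t := by rw [ht_def]; positivity
  have ht_eq : 2*L*sμ*t = η₁ := by rw [ht_def]; field_simp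
  have h4s : 4*sμ^2*t < 1 := by
    have hxs' : 2*(2*L*sμ*t)*sμ < L := by rw [ht_eq]; exact hxs
    nlinarith [hxs', mul_pos hLpos htpos]
  have h2t : 2*t < 1 := by nlinarith [h4s, hμbar2, htpos]
  have hyoung : -(4*t^2*SA + SE) ≤ 4*t*SAE := young_cs hSA_nonneg hSE_nonneg hCS htpos
  rw [h1, h2, h3]
  have hF2 : 0 < t*(1-2*t)*lam + 2*t^2*μ₀ - 4*κ*z*η₁^2 - 8*t*κ*z*(‖p‖*η₁) := by
    have heq : (t*(1-2*t)*lam + 2*t^2*μ₀ - 4*κ*z*η₁^2 - 8*t*κ*z*(‖p‖*η₁)) * L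
        = 8*z*κ*L^2*t*(L - 4*sμ^2*t*L - 2*‖p‖*sμ*t) := by
      rw [hμ₀eq, ← hL2', ← ht_eq]
      ring
    have hbr : 0 < L - 4*sμ^2*t*L - 2*‖p‖*sμ*t := by
      have hkey' : 2*(2*L*sμ*t)*sμ*L + (2*L*sμ*t)*‖p‖ < L^2 := by rw [ht_eq]; exact hkey
      by_contra hcon
      push_neg at hcon
      nlinarith [hkey', mul_le_mul_of_nonneg_left hcon (le_of_lt hLpos)]
    have hpos : 0 < (t*(1-2*t)*lam + 2*t^2*μ₀ - 4*κ*z*η₁^2 - 8*t*κ*z*(‖p‖*η₁)) * L := by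
      rw [heq]
      exact mul_pos (by positivity) hbr
    by_contra hcon
    push_neg at hcon
    nlinarith [hpos, mul_le_mul_of_nonneg_right hcon (le_of_lt hLpos)]
  have hB1 : t*(1-2*t)*lam ≤ t*(1-2*t)*(2*κ*SA + OM) :=
    mul_le_mul_of_nonneg_left hlw (by nlinarith : (0:ℝ) ≤ t*(1-2*t))
  have hB2 : 2*t^2*μ₀ ≤ 2*t^2*OM := mul_le_mul_of_nonneg_left hμw (by positivity)
  have hB3 : κ*SE ≤ κ*(4*z*η₁^2) := mul_le_mul_of_nonneg_left hSE (le_of_lt hκ)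
  have hB4 : t*κ*(-(8*z*(‖p‖*η₁))) ≤ t*κ*W := by
    have := mul_le_mul_of_nonneg_left hW (by positivity : (0:ℝ) ≤ t*κ)
    linarith [this]
  have hB5 : -(κ*(4*t^2*SA + SE)) ≤ κ*(4*t*SAE) := by
    have h := mul_le_mul_of_nonneg_left hyoung (le_of_lt hκ)
    linarith [h]
  have hB6 : (0:ℝ) ≤ 2*t*(κ*SE) := by
    have : (0:ℝ) ≤ SE := hSE_nonneg
    positivity
  have hident : t*(2*κ*(SA + 2*SAE + SE) + (κ*W + OM))
      = t*(1-2*t)*(2*κ*SA + OM) + 2*t^2*OM + (κ*(4*t*SAE) + κ*(4*t^2*SA + SE))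
        - κ*SE + 2*t*(κ*SE) + t*κ*W := by ring
  have hTpos : 0 < t*(2*κ*(SA + 2*SAE + SE) + (κ*W + OM)) := by
    rw [hident]
    have h0 : (0:ℝ) ≤ κ*(4*t*SAE) + κ*(4*t^2*SA + SE) := by linarith [hB5]
    linarith [hB1, hB2, hB3, hB4, h0, hB6, hF2]
  by_contra hcon
  push_neg at hcon
  have h := mul_nonpos_of_nonneg_of_nonpos (le_of_lt htpos) hcon
  linarith [hTpos, h]


end NPS


open NPS in
set_option maxHeartbeats 2000000 in
/-- **Theorem 4 (Nearby prestress stable framework).** Under the framework setup with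
`D_pss < 1/2`, there is `p' ∈ 𝒞^p` with `|p'−p| ≤ η₁` such that for the stress
`ω'_{ij} = κ(|p'_i−p'_j|² − |p_i−p_j|²) + ω_{ij}` the energy gradient vanishes on `𝒞` at `p'`
and the energy Hessian `2κ|R(p')v|² + Ω_{ω'}(v)` is positive definite on `𝒞`; in particular
every nonzero `v ∈ 𝒞` with `R(p')v = 0` has `Ω_{ω'}(v) > 0`, so `p'` is prestress stable. -/
theorem nearby_prestress_stable {n d m : ℕ} (E : Fin m → Fin n × Fin n) (hm : 0 < m)
    (hE : ∀ k, (E k).1 ≠ (E k).2)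
    (p : Config n d) (C : Submodule ℝ (Config n d))
    (z κ lam μ₀ : ℝ) (ω : EuclideanSpace ℝ (Fin m))
    (hz : 1 ≤ z) (hdeg : degBound E z)
    (hκ : 0 < κ) (hlam : 0 < lam) (hμ₀ : μ₀ ≤ lam / 2)
    (hlower : ∀ v ∈ C, ‖v‖ = 1 → lam ≤ 2 * κ * ‖rig E p v‖ ^ 2 + stressForm E ω v)
    (hμlower : ∀ v ∈ C, ‖v‖ = 1 → μ₀ ≤ stressForm E ω v)
    (L μbar η₁ Dpss : ℝ)
    (hL : L = Real.sqrt (lam / (8 * z * κ)))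
    (hμbar : μbar = 1 - μ₀ / lam)
    (hη₁ : η₁ = 4 * ‖stressGrad E ω p‖ / lam)
    (hDpss : Dpss = (η₁ / L) * (Real.sqrt μbar + (3 / 2) * (η₁ / L) + (1 / 2) * (‖p‖ / L)))
    (hDlt : Dpss < 1 / 2) :
    ∃ p' : Config n d, ∃ ω' : EuclideanSpace ℝ (Fin m),
      (∀ k, ω' k = κ * (‖p' (E k).1 - p' (E k).2‖ ^ 2 - ‖p (E k).1 - p (E k).2‖ ^ 2) + ω k) ∧
      p' - p ∈ C ∧ ‖p' - p‖ ≤ η₁ ∧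
      (∀ v ∈ C, ∑ k, ω' k * ⟪p' (E k).1 - p' (E k).2, v (E k).1 - v (E k).2⟫_ℝ = 0) ∧
      (∀ v ∈ C, v ≠ 0 → 0 < 2 * κ * ‖rig E p' v‖ ^ 2 + stressForm E ω' v) ∧
      (∀ v ∈ C, v ≠ 0 → rig E p' v = 0 → 0 < stressForm E ω' v) := by
  classical
  have hzpos : (0:ℝ) < z := lt_of_lt_of_le one_pos hz
  have hgnorm : ‖stressGrad E ω p‖ = lam * η₁ / 4 := by
    rw [hη₁]; field_simp
  have hη₁nn : 0 ≤ η₁ := by rw [hη₁]; positivity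
  have hLpos : 0 < L := by rw [hL]; exact Real.sqrt_pos.mpr (by positivity)
  have hL2 : L^2 = lam/(8*z*κ) := by rw [hL]; exact Real.sq_sqrt (by positivity)
  have hL2' : 8*z*κ*L^2 = lam := by
    rw [hL2]; field_simp
  have hμbar2 : 1/2 ≤ μbar := by
    rw [hμbar]
    have : μ₀/lam ≤ 1/2 := by rw [div_le_iff₀ hlam]; linarith
    linarith
  have hμbarnn : (0:ℝ) ≤ μbar := by linarith
  set sμ := Real.sqrt μbar with hsμdef
  have hsμ2 : sμ^2 = μbar := Real.sq_sqrt hμbarnn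
  have hsμpos : 0 < sμ := Real.sqrt_pos.mpr (by linarith)
  have hμbar2' : 1/2 ≤ sμ^2 := by rw [hsμ2]; exact hμbar2
  have hμ₀eq : μ₀ = lam*(1 - sμ^2) := by
    rw [hsμ2, hμbar]
    field_simp
    ring
  have hrig0 : rig E p (0 : Config n d) = 0 := by
    ext k
    simp [rig]
  have hSF0 : stressForm E ω (0 : Config n d) = 0 := by
    simp [stressForm]
  have hlower' : ∀ v ∈ C, lam * ‖v‖^2 ≤ 2*κ*‖rig E p v‖^2 + stressForm E ω v := by
    intro v hv
    rcases eq_or_ne v 0 with rfl|hne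
    · rw [hrig0, hSF0]; simp
    · have hnv : 0 < ‖v‖ := norm_pos_iff.mpr hne
      have h := hlower _ (C.smul_mem (‖v‖⁻¹) hv) (norm_smul_inv_norm hne)
      have hsc := hess_scale E κ ω p (‖v‖) (‖v‖⁻¹ • v)
      rw [smul_inv_smul₀ (ne_of_gt hnv)] at hsc
      rw [hsc]
      calc lam * ‖v‖^2 = ‖v‖^2 * lam := by ring
        _ ≤ ‖v‖^2 * (2*κ*‖rig E p (‖v‖⁻¹ • v)‖^2 + stressForm E ω (‖v‖⁻¹ • v)) :=
            mul_le_mul_of_nonneg_left h (by positivity)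
  have hμlower' : ∀ v ∈ C, μ₀ * ‖v‖^2 ≤ stressForm E ω v := by
    intro v hv
    rcases eq_or_ne v 0 with rfl|hne
    · rw [hSF0]; simp
    · have hnv : 0 < ‖v‖ := norm_pos_iff.mpr hne
      have h := hμlower _ (C.smul_mem (‖v‖⁻¹) hv) (norm_smul_inv_norm hne)
      have hsf := stressForm_smul E ω (‖v‖) (‖v‖⁻¹ • v)
      rw [smul_inv_smul₀ (ne_of_gt hnv)] at hsf
      rw [hsf]
      calc μ₀ * ‖v‖^2 = ‖v‖^2 * μ₀ := by ring
        _ ≤ ‖v‖^2 * stressForm E ω (‖v‖⁻¹ • v) := mul_le_mul_of_nonneg_left h (by positivity)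
  by_cases hη0 : η₁ = 0
  · -- degenerate case : p itself works
    have hg0 : stressGrad E ω p = 0 := by
      have : ‖stressGrad E ω p‖ = 0 := by rw [hgnorm, hη0]; ring
      exact norm_eq_zero.mp this
    have hbul5 : ∀ v ∈ C, v ≠ 0 → 0 < 2*κ*‖rig E p v‖^2 + stressForm E ω v := by
      intro v hv hvne
      have h := hlower' v hv
      have hnv : 0 < ‖v‖ := norm_pos_iff.mpr hvne
      have : 0 < lam * ‖v‖^2 := mul_pos hlam (pow_pos hnv 2)
      linarith
    refine ⟨p, ω, fun k => by simp, by rw [sub_self]; exact C.zero_mem, ?_, ?_, ?_, ?_⟩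
    · rw [sub_self, norm_zero]; exact hη₁nn
    · intro v hv
      have := grad_inner E ω p v
      rw [hg0] at this
      simpa [ed] using this
    · exact hbul5
    · intro v hv hvne hr
      have h := hbul5 v hv hvne
      rw [hr, norm_zero] at h
      simpa using h
  · -- main case
    have hη₁pos : 0 < η₁ := lt_of_le_of_ne hη₁nn (Ne.symm hη0)
    have hD1 : (η₁/L)*sμ < 1/2 := by
      have hstep : (η₁/L)*sμ ≤ Dpss := by
        rw [hDpss]
        nlinarith [mul_nonneg (by positivity : (0:ℝ) ≤ η₁/L)
          (by positivity : (0:ℝ) ≤ (3/2)*(η₁/L) + (1/2)*(‖p‖/L))]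
      linarith
    have hxs : 2*η₁*sμ < L := by
      have e : (η₁/L)*sμ*(2*L) = 2*η₁*sμ := by field_simp
      nlinarith [mul_lt_mul_of_pos_right hD1 (by positivity : (0:ℝ) < 2*L), e]
    have hkey : 2*η₁*sμ*L + η₁*‖p‖ < L^2 := by
      have h2D : (η₁/L) * (sμ + (3/2)*(η₁/L) + (1/2)*(‖p‖/L)) < 1/2 := by
        rw [hDpss] at hDlt; exact hDlt
      have e : ((η₁/L)*(sμ + (3/2)*(η₁/L) + (1/2)*(‖p‖/L)))*(2*L^2)
          = 2*η₁*sμ*L + 3*η₁^2 + η₁*‖p‖ := by field_simp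
      nlinarith [mul_lt_mul_of_pos_right h2D (by positivity : (0:ℝ) < 2*L^2), e, sq_nonneg η₁]
    -- minimize the energy on the ball
    have hGc : Continuous (energy E κ ω p) := energy_continuous E κ ω p
    have hCclosed : IsClosed (C : Set (Config n d)) := by
      set_option synthInstance.maxHeartbeats 400000 in exact Submodule.closed_of_finiteDimensional C
    have hKcomp : IsCompact ((C : Set (Config n d)) ∩ Metric.closedBall 0 η₁) :=
      (isCompact_closedBall (0:Config n d) η₁).inter_left hCclosed
    have hKne : ((C : Set (Config n d)) ∩ Metric.closedBall 0 η₁).Nonempty :=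
      ⟨0, ⟨C.zero_mem, Metric.mem_closedBall_self hη₁nn⟩⟩
    obtain ⟨v₀, hv₀K, hv₀min⟩ := hKcomp.exists_isMinOn hKne hGc.continuousOn
    have hv₀C : v₀ ∈ C := hv₀K.1
    have hv₀le : ‖v₀‖ ≤ η₁ := by
      have := hv₀K.2
      rwa [Metric.mem_closedBall, dist_zero_right] at this
    have hmin : ∀ w ∈ ((C : Set (Config n d)) ∩ Metric.closedBall 0 η₁),
        energy E κ ω p v₀ ≤ energy E κ ω p w := fun w hw => hv₀min hw
    have hbd : ∀ w, w ∈ C → ‖w‖ = η₁ → 0 < energy E κ ω p w := by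
      intro w hwC hwn
      refine boundary_pos E hE z κ lam μ₀ L sμ η₁ ω p w hdeg hκ hlam hzpos hLpos hη₁pos
        hL2' hsμpos hμbar2' hμ₀eq hxs (hlower' w hwC) (hμlower' w hwC) ?_ hwn
      rw [grad_inner]
      have h1 : -(‖stressGrad E ω p‖*‖w‖) ≤ ⟪stressGrad E ω p, w⟫_ℝ :=
        (abs_le.mp (abs_real_inner_le_norm _ _)).1
      rw [hgnorm, hwn] at h1
      linarith
    have hv₀lt : ‖v₀‖ < η₁ := by
      rcases lt_or_eq_of_le hv₀le with h|h
      · exact h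
      · exfalso
        have h1 := hbd v₀ hv₀C h
        have h2 := hmin 0 ⟨C.zero_mem, Metric.mem_closedBall_self hη₁nn⟩
        rw [energy_zero] at h2
        linarith
    -- gradient vanishes at the minimizer
    have hgrad0 : ∀ v ∈ C,
        (∑ k, (κ * edelta E p v₀ k + ω k) * ⟪ed E k (p+v₀), ed E k v⟫_ℝ) = 0 := by
      intro v hv
      have hεpos : 0 < (η₁ - ‖v₀‖)/(‖v‖+1) :=
        div_pos (by linarith) (by positivity)
      refine quartic_zero (c₂ := ∑ k, (κ*(⟪ed E k (p+v₀), ed E k v⟫_ℝ)^2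
          + ((κ/2)*(edelta E p v₀ k) + ω k/2)*‖ed E k v‖^2))
        (c₃ := ∑ k, κ*(⟪ed E k (p+v₀), ed E k v⟫_ℝ)*‖ed E k v‖^2)
        (c₄ := ∑ k, (κ/4)*(‖ed E k v‖^2)^2) hεpos ?_
      intro s hs
      have hmem : v₀ + s • v ∈ ((C : Set (Config n d)) ∩ Metric.closedBall 0 η₁) := by
        refine ⟨C.add_mem hv₀C (C.smul_mem s hv), ?_⟩
        rw [Metric.mem_closedBall, dist_zero_right]
        have h1 : ‖v₀ + s • v‖ ≤ ‖v₀‖ + |s| * ‖v‖ := by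
          calc ‖v₀ + s • v‖ ≤ ‖v₀‖ + ‖s • v‖ := norm_add_le _ _
            _ = ‖v₀‖ + |s| * ‖v‖ := by rw [norm_smul]; rfl
        have h2 : |s| * ‖v‖ ≤ (η₁ - ‖v₀‖)/(‖v‖+1)*‖v‖ :=
          mul_le_mul_of_nonneg_right hs (norm_nonneg v)
        have h3 : (η₁ - ‖v₀‖)/(‖v‖+1)*‖v‖ ≤ η₁ - ‖v₀‖ := by
          rw [div_mul_eq_mul_div, div_le_iff₀ (by positivity)]
          nlinarith [norm_nonneg v, hv₀lt]
        linarith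
      have hle := hmin _ hmem
      have hexp : energy E κ ω p (v₀ + s • v)
          = energy E κ ω p v₀
            + (∑ k, (κ * edelta E p v₀ k + ω k) * ⟪ed E k (p+v₀), ed E k v⟫_ℝ)*s
            + (∑ k, (κ*(⟪ed E k (p+v₀), ed E k v⟫_ℝ)^2
                + ((κ/2)*(edelta E p v₀ k) + ω k/2)*‖ed E k v‖^2))*s^2
            + (∑ k, κ*(⟪ed E k (p+v₀), ed E k v⟫_ℝ)*‖ed E k v‖^2)*s^3
            + (∑ k, (κ/4)*(‖ed E k v‖^2)^2)*s^4 := by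
        show energy E κ ω p (v₀ + s • v)
            = (∑ k, ((κ/4) * (edelta E p v₀ k)^2 + (ω k/2) * (edelta E p v₀ k))) + _ + _ + _ + _
        rw [Finset.sum_mul, Finset.sum_mul, Finset.sum_mul, Finset.sum_mul,
          ← Finset.sum_add_distrib, ← Finset.sum_add_distrib, ← Finset.sum_add_distrib,
          ← Finset.sum_add_distrib]
        unfold energy
        refine Finset.sum_congr rfl (fun k _ => ?_)
        rw [edelta_shift]
        ring
      rw [hexp] at hle
      linarith
    refine ⟨p + v₀, WithLp.toLp 2 (fun k => κ * edelta E p v₀ k + ω k), fun k => rfl, ?_, ?_, ?_, ?_, ?_⟩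
    · rw [add_sub_cancel_left]; exact hv₀C
    · rw [add_sub_cancel_left]; exact le_of_lt hv₀lt
    · intro v hv
      exact hgrad0 v hv
    · intro v hv hvne
      have hnv : 0 < ‖v‖ := norm_pos_iff.mpr hvne
      have h := hessian_pos E hE z κ lam μ₀ L sμ η₁ ω p v₀ (‖v‖⁻¹ • v) hdeg hκ hlam hzpos
        hLpos hη₁pos hL2' hsμpos hμbar2' hμ₀eq hxs hkey hv₀le
        (hlower _ (C.smul_mem _ hv) (norm_smul_inv_norm hvne))
        (hμlower _ (C.smul_mem _ hv) (norm_smul_inv_norm hvne))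
        (norm_smul_inv_norm hvne)
      have hsc := hess_scale E κ (WithLp.toLp 2 (fun k => κ * edelta E p v₀ k + ω k)) (p+v₀) (‖v‖) (‖v‖⁻¹ • v)
      rw [smul_inv_smul₀ (ne_of_gt hnv)] at hsc
      rw [hsc]
      exact mul_pos (pow_pos hnv 2) h
    · intro v hv hvne hr
      have hnv : 0 < ‖v‖ := norm_pos_iff.mpr hvne
      have h := hessian_pos E hE z κ lam μ₀ L sμ η₁ ω p v₀ (‖v‖⁻¹ • v) hdeg hκ hlam hzpos
        hLpos hη₁pos hL2' hsμpos hμbar2' hμ₀eq hxs hkey hv₀le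
        (hlower _ (C.smul_mem _ hv) (norm_smul_inv_norm hvne))
        (hμlower _ (C.smul_mem _ hv) (norm_smul_inv_norm hvne))
        (norm_smul_inv_norm hvne)
      have hsc := hess_scale E κ (WithLp.toLp 2 (fun k => κ * edelta E p v₀ k + ω k)) (p+v₀) (‖v‖) (‖v‖⁻¹ • v)
      rw [smul_inv_smul₀ (ne_of_gt hnv)] at hsc
      have h2 : 0 < 2*κ*‖rig E (p+v₀) v‖^2 + stressForm E (WithLp.toLp 2 (fun k => κ * edelta E p v₀ k + ω k)) v := by
        rw [hsc]; exact mul_pos (pow_pos hnv 2) h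
      rw [hr, norm_zero] at h2
      have : (0:ℝ)^2 = 0 := by norm_num
      rw [this, mul_zero] at h2
      linarith [h2]
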